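/- Let f be the standard normal density, Q its tail function, and Φ its cdf. Then for all real x, 2Q(x) + x·f(x) - √(x²+4)·f(x) > 0. -/

import Mathlib

open Real MeasureTheory Set

noncomputable def stdNormalPdf (x : ℝ) : ℝ := (Real.sqrt (2 * Real.pi))⁻¹ * Real.exp (-x ^ 2 / 2)

noncomputable def gaussQ (x : ℝ) : ℝ := ∫ t in Set.Ici x, stdNormalPdf t

noncomputable def gaussPhi (x : ℝ) : ℝ := ∫ t in Set.Iic x, stdNormalPdf t

lemma pdf_pos (x : ℝ) : 0 < stdNormalPdf x := by
  unfold stdNormalPdf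
  positivity

lemma pdf_cont : Continuous stdNormalPdf := by
  unfold stdNormalPdf
  fun_prop

lemma pdf_integrable : Integrable stdNormalPdf := by
  have h : stdNormalPdf = fun x => (Real.sqrt (2 * Real.pi))⁻¹ * Real.exp (-(1/2) * x ^ 2) := by
    funext x; unfold stdNormalPdf; ring_nf
  rw [h]
  exact (integrable_exp_neg_mul_sq (by norm_num)).const_mul _

lemma pdf_hasDerivAt (x : ℝ) :
    HasDerivAt stdNormalPdf (-x * stdNormalPdf x) x := by
  have h1 : HasDerivAt (fun t : ℝ => -t ^ 2 / 2) (-x) x := by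
    have := ((hasDerivAt_pow 2 x).neg).div_const 2
    refine this.congr_deriv ?_
    push_cast; ring
  have h2 := (h1.exp).const_mul (Real.sqrt (2 * Real.pi))⁻¹
  refine h2.congr_deriv ?_
  unfold stdNormalPdf
  ring

lemma gaussQ_eq (x : ℝ) :
    gaussQ x = gaussQ 0 - ∫ t in (0:ℝ)..x, stdNormalPdf t := by
  have hInt := pdf_integrable
  have h : ∀ a : ℝ, gaussQ a = (∫ t, stdNormalPdf t) - gaussPhi a := by
    intro a
    have hcompl := integral_add_compl (measurableSet_Iic (a := a)) hInt
    have hIic : gaussPhi a = ∫ t in Set.Iic a, stdNormalPdf t := rfl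
    have hIoi : (Set.Iic a)ᶜ = Set.Ioi a := by simp
    rw [hIoi] at hcompl
    unfold gaussQ gaussPhi
    rw [MeasureTheory.integral_Ici_eq_integral_Ioi]
    linarith [hcompl]
  rw [h x, h 0]
  have hsub : gaussPhi x - gaussPhi 0 = ∫ t in (0:ℝ)..x, stdNormalPdf t := by
    unfold gaussPhi
    exact intervalIntegral.integral_Iic_sub_Iic hInt.integrableOn hInt.integrableOn
  linarith

lemma gaussQ_hasDerivAt (x : ℝ) :
    HasDerivAt gaussQ (-stdNormalPdf x) x := by
  have h : HasDerivAt (fun u => ∫ t in (0:ℝ)..u, stdNormalPdf t) (stdNormalPdf x) x :=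
    intervalIntegral.integral_hasDerivAt_right pdf_integrable.intervalIntegrable
      (pdf_cont.stronglyMeasurableAtFilter _ _) pdf_cont.continuousAt
  have h2 : HasDerivAt (fun u => gaussQ 0 - ∫ t in (0:ℝ)..u, stdNormalPdf t)
      (-stdNormalPdf x) x := by
    exact ((hasDerivAt_const x (gaussQ 0)).sub h).congr_deriv (by simp)
  exact h2.congr_of_eventuallyEq (Filter.Eventually.of_forall fun y => gaussQ_eq y)

lemma gaussQ_tendsto : Filter.Tendsto gaussQ Filter.atTop (nhds 0) := by
  have h := tendsto_setIntegral_of_antitone (μ := volume) (f := stdNormalPdf)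
    (s := fun i : ℝ => Set.Ici i) (fun i => measurableSet_Ici)
    (fun i j hij => Set.Ici_subset_Ici.mpr hij) ⟨0, pdf_integrable.integrableOn⟩
  have hempty : (⋂ n : ℝ, Set.Ici n) = ∅ := by
    ext y
    simp only [Set.mem_iInter, Set.mem_Ici, Set.mem_empty_iff_false, iff_false, not_forall]
    exact ⟨y + 1, by linarith⟩
  rw [hempty] at h
  simp at h; exact h

noncomputable def gfun (x : ℝ) : ℝ :=
  2 * gaussQ x + (x - Real.sqrt (x ^ 2 + 4)) * stdNormalPdf x

lemma sq_lemma (x : ℝ) : Real.sqrt (x ^ 2 + 4) ^ 2 = x ^ 2 + 4 :=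
  Real.sq_sqrt (by positivity)

lemma s_pos (x : ℝ) : 0 < Real.sqrt (x ^ 2 + 4) :=
  Real.sqrt_pos.mpr (by positivity)

lemma s_hasDerivAt (x : ℝ) :
    HasDerivAt (fun t : ℝ => Real.sqrt (t ^ 2 + 4))
      (x / Real.sqrt (x ^ 2 + 4)) x := by
  have h1 : HasDerivAt (fun t : ℝ => t ^ 2 + 4) (2 * x) x := by
    simpa using (hasDerivAt_pow 2 x).add_const 4
  have h2 := h1.sqrt (by positivity)
  convert h2 using 1
  ring

lemma gfun_hasDerivAt (x : ℝ) :
    HasDerivAt gfun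
      (stdNormalPdf x * (-1 - x / Real.sqrt (x ^ 2 + 4) - x ^ 2
        + x * Real.sqrt (x ^ 2 + 4))) x := by
  have hQ := (gaussQ_hasDerivAt x).const_mul 2
  have hlin : HasDerivAt (fun t : ℝ => t - Real.sqrt (t ^ 2 + 4))
      (1 - x / Real.sqrt (x ^ 2 + 4)) x := (hasDerivAt_id x).sub (s_hasDerivAt x)
  have hprod := hlin.mul (pdf_hasDerivAt x)
  have h := hQ.add hprod
  refine h.congr_deriv ?_
  ring

lemma gfun_deriv_neg (x : ℝ) :
    stdNormalPdf x * (-1 - x / Real.sqrt (x ^ 2 + 4) - x ^ 2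
      + x * Real.sqrt (x ^ 2 + 4)) < 0 := by
  have hs := s_pos x
  have hsq := sq_lemma x
  set s := Real.sqrt (x ^ 2 + 4) with hs_def
  have hf := pdf_pos x
  have hx3 : x ^ 3 + 3 * x < (1 + x ^ 2) * s := by
    rcases le_or_gt x 0 with hx | hx
    · nlinarith [mul_pos (by positivity : (0:ℝ) < 1 + x ^ 2) hs]
    · have h1 : 0 < x ^ 3 + 3 * x := by positivity
      by_contra hcon
      push_neg at hcon
      have h2 : ((1 + x ^ 2) * s) ^ 2 ≤ (x ^ 3 + 3 * x) ^ 2 :=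
        pow_le_pow_left₀ (by positivity) hcon 2
      rw [mul_pow, hsq] at h2
      nlinarith [h2]
  have hkey : -1 - x / s - x ^ 2 + x * s < 0 := by
    have key : (-1 - x ^ 2 + x * s) * s - x < 0 := by
      have hxs : x * s ^ 2 = x * (x ^ 2 + 4) := by rw [hsq]
      nlinarith [hx3, hxs]
    have heq : -1 - x / s - x ^ 2 + x * s = ((-1 - x ^ 2 + x * s) * s - x) / s := by
      field_simp; ring
    rw [heq]
    exact div_neg_of_neg_of_pos key hs
  exact mul_neg_of_pos_of_neg hf hkey

lemma gfun_strictAnti : StrictAnti gfun := by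
  apply strictAnti_of_deriv_neg
  intro x
  rw [(gfun_hasDerivAt x).deriv]
  exact gfun_deriv_neg x

lemma gfun_tendsto : Filter.Tendsto gfun Filter.atTop (nhds 0) := by
  have h1 : Filter.Tendsto (fun x => 2 * gaussQ x) Filter.atTop (nhds 0) := by
    simpa using gaussQ_tendsto.const_mul 2
  have h2 : Filter.Tendsto (fun x : ℝ => (x - Real.sqrt (x ^ 2 + 4)) * stdNormalPdf x)
      Filter.atTop (nhds 0) := by
    have hpdf : Filter.Tendsto stdNormalPdf Filter.atTop (nhds 0) := by
      have hexp : Filter.Tendsto (fun x : ℝ => Real.exp (-x ^ 2 / 2)) Filter.atTop (nhds 0) := by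
        apply Real.tendsto_exp_atBot.comp
        have h : Filter.Tendsto (fun x : ℝ => x ^ 2 / 2) Filter.atTop Filter.atTop :=
          (Filter.tendsto_pow_atTop (by norm_num)).atTop_div_const (by norm_num)
        exact (Filter.tendsto_neg_atTop_atBot.comp h).congr fun y => by
          simp [Function.comp, neg_div]
      have h2 := hexp.const_mul (Real.sqrt (2 * Real.pi))⁻¹
      rw [mul_zero] at h2
      exact h2
    apply squeeze_zero_norm' (a := fun y => 2 * stdNormalPdf y)
      ?_ (by simpa using hpdf.const_mul 2)
    filter_upwards [Filter.eventually_ge_atTop (0:ℝ)] with y hy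
    have hs := s_pos y
    have hle : Real.sqrt (y ^ 2 + 4) ≤ y + 2 := by
      rw [show y ^ 2 + 4 = y ^ 2 + 4 from rfl]
      have : Real.sqrt (y ^ 2 + 4) ≤ Real.sqrt ((y + 2) ^ 2) := by
        apply Real.sqrt_le_sqrt; nlinarith
      rwa [Real.sqrt_sq (by linarith)] at this
    have hge : y ≤ Real.sqrt (y ^ 2 + 4) := by
      have : Real.sqrt (y ^ 2) ≤ Real.sqrt (y ^ 2 + 4) := by
        apply Real.sqrt_le_sqrt; linarith
      rwa [Real.sqrt_sq hy] at this
    have hf := (pdf_pos y).le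
    rw [Real.norm_eq_abs, abs_mul, abs_of_nonpos (by linarith), abs_of_nonneg hf]
    nlinarith
  have h3 := h1.add h2; rw [add_zero] at h3; exact h3

theorem stmt5 (x : ℝ) :
    2 * gaussQ x + x * stdNormalPdf x - Real.sqrt (x ^ 2 + 4) * stdNormalPdf x > 0 := by
  have h1 : gfun (x + 1) < gfun x := gfun_strictAnti (by linarith)
  have h2 : (0:ℝ) ≤ gfun (x + 1) := by
    apply le_of_tendsto gfun_tendsto
    filter_upwards [Filter.eventually_ge_atTop (x + 1)] with y hy
    exact gfun_strictAnti.antitone hy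
  have : 0 < gfun x := lt_of_le_of_lt h2 h1
  unfold gfun at this
  linarith
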